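/- For every n ≥ 1, let H_n be the graph obtained from the disjoint union of a path Q0 of order 3 and n disjoint paths Q1, …, Qn each of order 7, by joining an endvertex a of Q0 to the center b_i (the 4th vertex) of each Q_i. Then H_n has no {P2,P5}-factor. -/

import Mathlib

open SimpleGraph

/-- `cCount H i` is the number of connected components of `H` with exactly `i` vertices. -/
noncomputable def cCount {V : Type*} (H : SimpleGraph V) (i : ℕ) : ℕ :=
  Nat.card {c : H.ConnectedComponent // Nat.card c.supp = i}

/-- The component `c` of `F` is (induces) a path of order `n`. -/
def IsPathComp {V : Type*} (F : SimpleGraph V) (n : ℕ) (c : F.ConnectedComponent) : Prop :=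
  Nonempty ((SimpleGraph.induce c.supp F) ≃g SimpleGraph.pathGraph n)

/-- `G` has a spanning subgraph each of whose components is a path of order in `ns`. -/
def HasPathFamilyFactor {V : Type*} (G : SimpleGraph V) (ns : Set ℕ) : Prop :=
  ∃ F ≤ G, ∀ c : F.ConnectedComponent, ∃ n ∈ ns, IsPathComp F n c

/-- `F` is a path-factor of `G`: a spanning subgraph each of whose components is a
path of order at least `2`. -/
def IsPathFactor {V : Type*} (G F : SimpleGraph V) : Prop :=
  F ≤ G ∧ ∀ c : F.ConnectedComponent, ∃ n, 2 ≤ n ∧ IsPathComp F n c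

/-- The neighbourhood `N_G(X)`: vertices outside `X` adjacent to some vertex of `X`. -/
def nbhd {V : Type*} (G : SimpleGraph V) (X : Set V) : Set V :=
  {v | v ∉ X ∧ ∃ u ∈ X, G.Adj u v}

/-- The graph `H_n`: a path `Q₀` of order `3` together with `n` disjoint paths of order
`7`, where the endvertex `0` of `Q₀` is joined to the center (4th vertex) of each `Qᵢ`. -/
def Hgraph (n : ℕ) : SimpleGraph (Fin 3 ⊕ Fin n × Fin 7) :=
  SimpleGraph.fromRel (fun u v =>
    (∃ i j : Fin 3, u = Sum.inl i ∧ v = Sum.inl j ∧ (SimpleGraph.pathGraph 3).Adj i j) ∨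
    (∃ k : Fin n, ∃ i j : Fin 7,
      u = Sum.inr (k, i) ∧ v = Sum.inr (k, j) ∧ (SimpleGraph.pathGraph 7).Adj i j) ∨
    (∃ k : Fin n, u = Sum.inl 0 ∧ v = Sum.inr (k, 3)))

section Aux

variable {V : Type*} {F : SimpleGraph V}

lemma card_supp_of_isPathComp {n : ℕ} {c : F.ConnectedComponent} (h : IsPathComp F n c) :
    Nat.card c.supp = n := by
  obtain ⟨e⟩ := h
  rw [Nat.card_congr e.toEquiv]
  simp

lemma exists_nbr_of_isPathComp {n : ℕ} (hn : 2 ≤ n) {c : F.ConnectedComponent}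
    (h : IsPathComp F n c) {v : V} (hv : v ∈ c.supp) : ∃ u, F.Adj v u := by
  obtain ⟨e⟩ := h
  set w : Fin n := e ⟨v, hv⟩ with hw
  have : ∃ u : Fin n, (pathGraph n).Adj w u := by
    rcases lt_or_ge (w.val + 1) n with h1 | h1
    · exact ⟨⟨w.val + 1, h1⟩, pathGraph_adj.mpr (Or.inl rfl)⟩
    · have h2 : 1 ≤ w.val := by have := w.isLt; omega
      exact ⟨⟨w.val - 1, by omega⟩, pathGraph_adj.mpr (Or.inr (by simp; omega))⟩
  obtain ⟨u, hu⟩ := this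
  refine ⟨(e.symm u : c.supp), ?_⟩
  have h3 : (SimpleGraph.induce c.supp F).Adj (e.symm w) (e.symm u) := e.symm.map_adj_iff.mpr hu
  rw [hw, e.symm_apply_apply] at h3
  exact h3

lemma mem_supp_of_adj {v u : V} (h : F.Adj v u) :
    u ∈ (F.connectedComponentMk v).supp :=
  ConnectedComponent.sound h.symm.reachable

lemma deg_le_two {n : ℕ} {v x y z : V} (h : IsPathComp F n (F.connectedComponentMk v))
    (hx : F.Adj v x) (hy : F.Adj v y) (hz : F.Adj v z) : x = y ∨ x = z ∨ y = z := by
  by_contra hc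
  push_neg at hc
  obtain ⟨hxy, hxz, hyz⟩ := hc
  obtain ⟨e⟩ := h
  have hv : v ∈ (F.connectedComponentMk v).supp := rfl
  have hxm : x ∈ (F.connectedComponentMk v).supp := mem_supp_of_adj hx
  have hym : y ∈ (F.connectedComponentMk v).supp := mem_supp_of_adj hy
  have hzm : z ∈ (F.connectedComponentMk v).supp := mem_supp_of_adj hz
  set w := e ⟨v, hv⟩
  set x' := e ⟨x, hxm⟩
  set y' := e ⟨y, hym⟩
  set z' := e ⟨z, hzm⟩
  have ax : (pathGraph n).Adj w x' := e.map_adj_iff.mpr hx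
  have ay : (pathGraph n).Adj w y' := e.map_adj_iff.mpr hy
  have az : (pathGraph n).Adj w z' := e.map_adj_iff.mpr hz
  have dxy : x'.val ≠ y'.val := fun hh => hxy
    (congrArg Subtype.val (e.toEquiv.injective (Fin.ext hh)))
  have dxz : x'.val ≠ z'.val := fun hh => hxz
    (congrArg Subtype.val (e.toEquiv.injective (Fin.ext hh)))
  have dyz : y'.val ≠ z'.val := fun hh => hyz
    (congrArg Subtype.val (e.toEquiv.injective (Fin.ext hh)))
  rw [pathGraph_adj] at ax ay az
  omega

lemma supp_card_three [Finite V] {x y z : V} (hxy : x ≠ y) (hxz : x ≠ z) (hyz : y ≠ z)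
    (axy : F.Adj x y) (ayz : F.Adj y z)
    (cx : ∀ w, F.Adj x w → w = y) (cy : ∀ w, F.Adj y w → w = x ∨ w = z)
    (cz : ∀ w, F.Adj z w → w = y) :
    Nat.card (F.connectedComponentMk x).supp = 3 := by
  have hsub : ∀ {u v : V} (p : F.Walk u v), u ∈ ({x, y, z} : Set V) → v ∈ ({x, y, z} : Set V) := by
    intro u v p
    induction p with
    | nil => exact id
    | cons h p ih =>
      intro hu
      apply ih
      rcases hu with rfl | rfl | rfl
      · simp [cx _ h]
      · rcases cy _ h with rfl | rfl <;> simp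
      · simp [cz _ h]
  have hset : (F.connectedComponentMk x).supp = {x, y, z} := by
    ext w
    simp only [ConnectedComponent.mem_supp_iff]
    constructor
    · intro h
      obtain ⟨p⟩ := ConnectedComponent.exact h
      exact hsub p.reverse (by simp)
    · rintro (rfl | rfl | rfl)
      · rfl
      · exact ConnectedComponent.sound axy.symm.reachable
      · exact ConnectedComponent.sound (ayz.symm.reachable.trans axy.symm.reachable)
  rw [hset]
  rw [Nat.card_coe_set_eq, Set.ncard_insert_of_notMem (by simp [hxy, hxz]),
    Set.ncard_pair hyz]

end Aux

lemma adj_inr {n : ℕ} {k : Fin n} {i : Fin 7} {v} (h : (Hgraph n).Adj (Sum.inr (k, i)) v) :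
    (i = 3 ∧ v = Sum.inl 0) ∨
      ∃ j : Fin 7, (i.val + 1 = j.val ∨ j.val + 1 = i.val) ∧ v = Sum.inr (k, j) := by
  rw [Hgraph, fromRel_adj] at h
  simp only [pathGraph_adj] at h
  obtain ⟨hne, h | h⟩ := h <;>
    rcases h with ⟨a, b, h1, h2, h3⟩ | ⟨a, b, c, h1, h2, h3⟩ | ⟨a, h1, h2⟩
  · exact absurd h1 (by simp)
  · rw [Sum.inr.injEq, Prod.mk.injEq] at h1
    obtain ⟨rfl, rfl⟩ := h1
    exact Or.inr ⟨c, h3, h2⟩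
  · exact absurd h1 (by simp)
  · exact absurd h2 (by simp)
  · rw [Sum.inr.injEq, Prod.mk.injEq] at h2
    obtain ⟨rfl, rfl⟩ := h2
    exact Or.inr ⟨b, Or.symm h3, h1⟩
  · rw [Sum.inr.injEq, Prod.mk.injEq] at h2
    obtain ⟨rfl, rfl⟩ := h2
    exact Or.inl ⟨rfl, h1⟩

lemma adj_inl {n : ℕ} {i : Fin 3} {v} (h : (Hgraph n).Adj (Sum.inl i) v) :
    (∃ j : Fin 3, (i.val + 1 = j.val ∨ j.val + 1 = i.val) ∧ v = Sum.inl j) ∨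
      (i = 0 ∧ ∃ k : Fin n, v = Sum.inr (k, 3)) := by
  rw [Hgraph, fromRel_adj] at h
  simp only [pathGraph_adj] at h
  obtain ⟨hne, h | h⟩ := h <;>
    rcases h with ⟨a, b, h1, h2, h3⟩ | ⟨a, b, c, h1, h2, h3⟩ | ⟨a, h1, h2⟩
  · rw [Sum.inl.injEq] at h1; subst h1
    exact Or.inl ⟨b, h3, h2⟩
  · exact absurd h1 (by simp)
  · rw [Sum.inl.injEq] at h1; subst h1
    exact Or.inr ⟨rfl, a, h2⟩
  · rw [Sum.inl.injEq] at h2; subst h2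
    exact Or.inl ⟨a, Or.symm h3, h1⟩
  · exact absurd h2 (by simp)
  · exact absurd h2 (by simp)

/-- `H_n` has no `{P₂, P₅}`-factor. -/
theorem stmt11 (n : ℕ) (hn : 1 ≤ n) : ¬ HasPathFamilyFactor (Hgraph n) {2, 5} := by
  rintro ⟨F, hFle, hF⟩
  -- basic facts
  have hcard : ∀ v, Nat.card (F.connectedComponentMk v).supp = 2 ∨
      Nat.card (F.connectedComponentMk v).supp = 5 := by
    intro v
    obtain ⟨m, hm, hp⟩ := hF (F.connectedComponentMk v)
    rcases hm with rfl | rfl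
    · exact Or.inl (card_supp_of_isPathComp hp)
    · exact Or.inr (card_supp_of_isPathComp hp)
  have hnbr : ∀ v, ∃ u, F.Adj v u := by
    intro v
    obtain ⟨m, hm, hp⟩ := hF (F.connectedComponentMk v)
    have hm2 : 2 ≤ m := by rcases hm with rfl | rfl <;> omega
    exact exists_nbr_of_isPathComp hm2 hp rfl
  have hdeg : ∀ v x y z, F.Adj v x → F.Adj v y → F.Adj v z → x = y ∨ x = z ∨ y = z := by
    intro v x y z hx hy hz
    obtain ⟨m, hm, hp⟩ := hF (F.connectedComponentMk v)
    exact deg_le_two hp hx hy hz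
  have noCard3 : ∀ x y z, x ≠ y → x ≠ z → y ≠ z → F.Adj x y → F.Adj y z →
      (∀ w, F.Adj x w → w = y) → (∀ w, F.Adj y w → w = x ∨ w = z) →
      (∀ w, F.Adj z w → w = y) → False := by
    intro x y z hxy hxz hyz axy ayz cx cy cz
    have := supp_card_three hxy hxz hyz axy ayz cx cy cz
    rcases hcard x with h | h <;> omega
  -- Q_k vertex notation
  have hQ : ∀ (k : Fin n) (i : Fin 7) w, F.Adj (Sum.inr (k, i)) w →
      (i = 3 ∧ w = Sum.inl 0) ∨
        ∃ j : Fin 7, (i.val + 1 = j.val ∨ j.val + 1 = i.val) ∧ w = Sum.inr (k, j) :=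
    fun k i w hw => adj_inr (hFle hw)
  -- Key lemma: the center of no Q_k is matched to `a = inl 0`.
  have L1 : ∀ k : Fin n, F.Adj (Sum.inr (k, 3)) (Sum.inl 0) → False := by
    intro k e3a
    by_cases h23 : F.Adj (Sum.inr (k, (2:Fin 7))) (Sum.inr (k, (3:Fin 7)))
    · -- edge 2-3 present; then 3 has no other Q-neighbor, so {4,5,6} is a component
      have h34 : ¬ F.Adj (Sum.inr (k, (3:Fin 7))) (Sum.inr (k, (4:Fin 7))) := by
        intro h34
        have hne : ∀ (i j : Fin 7), i ≠ j → (Sum.inr (k, i) : Fin 3 ⊕ Fin n × Fin 7) ≠ Sum.inr (k, j) := by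
          intro i j hij hh
          rw [Sum.inr.injEq, Prod.mk.injEq] at hh
          exact hij hh.2
        rcases hdeg _ _ _ _ h23.symm h34 e3a with h | h | h
        · exact hne 2 4 (by decide) h
        · exact absurd h (by simp)
        · exact absurd h (by simp)
      obtain ⟨w4, hw4⟩ := hnbr (Sum.inr (k, (4:Fin 7)))
      have e45 : F.Adj (Sum.inr (k, (4:Fin 7))) (Sum.inr (k, (5:Fin 7))) := by
        rcases hQ k 4 w4 hw4 with ⟨hi, _⟩ | ⟨j, hj, rfl⟩
        · exact absurd hi (by decide)
        · have hjv : (4:Fin 7).val = 4 := rfl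
          have h1v : (3:Fin 7).val = 3 := rfl
          have : j.val = 5 ∨ j.val = 3 := by omega
          rcases this with h | h
          · have : j = 5 := Fin.ext (by rw [h]; rfl)
            subst this; exact hw4
          · have : j = 3 := Fin.ext (by rw [h]; rfl)
            subst this; exact absurd hw4.symm (fun hh => h34 hh)
      obtain ⟨w6, hw6⟩ := hnbr (Sum.inr (k, (6:Fin 7)))
      have e65 : F.Adj (Sum.inr (k, (6:Fin 7))) (Sum.inr (k, (5:Fin 7))) := by
        rcases hQ k 6 w6 hw6 with ⟨hi, _⟩ | ⟨j, hj, rfl⟩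
        · exact absurd hi (by decide)
        · have hjv : (6:Fin 7).val = 6 := rfl
          have : j.val = 5 := by omega
          have : j = 5 := Fin.ext (by rw [this]; rfl)
          subst this; exact hw6
      refine noCard3 (Sum.inr (k, (4:Fin 7))) (Sum.inr (k, (5:Fin 7))) (Sum.inr (k, (6:Fin 7)))
        (by simp) (by simp) (by simp) e45 e65.symm ?_ ?_ ?_
      · intro w hw
        rcases hQ k 4 w hw with ⟨hi, _⟩ | ⟨j, hj, rfl⟩
        · exact absurd hi (by decide)
        · have hjv : (4:Fin 7).val = 4 := rfl
          have : j.val = 5 ∨ j.val = 3 := by omega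
          rcases this with h | h
          · have : j = 5 := Fin.ext (by rw [h]; rfl)
            subst this; rfl
          · have : j = 3 := Fin.ext (by rw [h]; rfl)
            subst this; exact absurd hw.symm (fun hh => h34 hh)
      · intro w hw
        rcases hQ k 5 w hw with ⟨hi, _⟩ | ⟨j, hj, rfl⟩
        · exact absurd hi (by decide)
        · have hjv : (5:Fin 7).val = 5 := rfl
          have : j.val = 6 ∨ j.val = 4 := by omega
          rcases this with h | h
          · have : j = 6 := Fin.ext (by rw [h]; rfl)
            subst this; exact Or.inr rfl
          · have : j = 4 := Fin.ext (by rw [h]; rfl)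
            subst this; exact Or.inl rfl
      · intro w hw
        rcases hQ k 6 w hw with ⟨hi, _⟩ | ⟨j, hj, rfl⟩
        · exact absurd hi (by decide)
        · have hjv : (6:Fin 7).val = 6 := rfl
          have : j.val = 5 := by omega
          have : j = 5 := Fin.ext (by rw [this]; rfl)
          subst this; rfl
    · -- edge 2-3 absent; then {0,1,2} is a component
      obtain ⟨w0, hw0⟩ := hnbr (Sum.inr (k, (0:Fin 7)))
      have e01 : F.Adj (Sum.inr (k, (0:Fin 7))) (Sum.inr (k, (1:Fin 7))) := by
        rcases hQ k 0 w0 hw0 with ⟨hi, _⟩ | ⟨j, hj, rfl⟩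
        · exact absurd hi (by decide)
        · have hjv : (0:Fin 7).val = 0 := rfl
          have : j.val = 1 := by omega
          have : j = 1 := Fin.ext (by rw [this]; rfl)
          subst this; exact hw0
      obtain ⟨w2, hw2⟩ := hnbr (Sum.inr (k, (2:Fin 7)))
      have e21 : F.Adj (Sum.inr (k, (2:Fin 7))) (Sum.inr (k, (1:Fin 7))) := by
        rcases hQ k 2 w2 hw2 with ⟨hi, _⟩ | ⟨j, hj, rfl⟩
        · exact absurd hi (by decide)
        · have hjv : (2:Fin 7).val = 2 := rfl
          have : j.val = 3 ∨ j.val = 1 := by omega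
          rcases this with h | h
          · have : j = 3 := Fin.ext (by rw [h]; rfl)
            subst this; exact absurd hw2 h23
          · have : j = 1 := Fin.ext (by rw [h]; rfl)
            subst this; exact hw2
      refine noCard3 (Sum.inr (k, (0:Fin 7))) (Sum.inr (k, (1:Fin 7))) (Sum.inr (k, (2:Fin 7)))
        (by simp) (by simp) (by simp) e01 e21.symm ?_ ?_ ?_
      · intro w hw
        rcases hQ k 0 w hw with ⟨hi, _⟩ | ⟨j, hj, rfl⟩
        · exact absurd hi (by decide)
        · have hjv : (0:Fin 7).val = 0 := rfl
          have : j.val = 1 := by omega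
          have : j = 1 := Fin.ext (by rw [this]; rfl)
          subst this; rfl
      · intro w hw
        rcases hQ k 1 w hw with ⟨hi, _⟩ | ⟨j, hj, rfl⟩
        · exact absurd hi (by decide)
        · have hjv : (1:Fin 7).val = 1 := rfl
          have : j.val = 2 ∨ j.val = 0 := by omega
          rcases this with h | h
          · have : j = 2 := Fin.ext (by rw [h]; rfl)
            subst this; exact Or.inr rfl
          · have : j = 0 := Fin.ext (by rw [h]; rfl)
            subst this; exact Or.inl rfl
      · intro w hw
        rcases hQ k 2 w hw with ⟨hi, _⟩ | ⟨j, hj, rfl⟩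
        · exact absurd hi (by decide)
        · have hjv : (2:Fin 7).val = 2 := rfl
          have : j.val = 3 ∨ j.val = 1 := by omega
          rcases this with h | h
          · have : j = 3 := Fin.ext (by rw [h]; rfl)
            subst this; exact absurd hw h23
          · have : j = 1 := Fin.ext (by rw [h]; rfl)
            subst this; rfl
  -- Now `a = inl 0` can only be matched to `inl 1`, and Q0 = {a, inl 1, inl 2}
  -- would be a whole component of size 3: contradiction.
  have ca : ∀ w, F.Adj (Sum.inl (0:Fin 3) : Fin 3 ⊕ Fin n × Fin 7) w → w = Sum.inl 1 := by
    intro w hw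
    rcases adj_inl (hFle hw) with ⟨j, hj, rfl⟩ | ⟨_, k, rfl⟩
    · have h0v : (0:Fin 3).val = 0 := rfl
      have : j.val = 1 := by omega
      have : j = 1 := Fin.ext (by rw [this]; rfl)
      subst this; rfl
    · exact absurd hw.symm (L1 k)
  obtain ⟨wa, hwa⟩ := hnbr (Sum.inl (0:Fin 3))
  have eap : F.Adj (Sum.inl (0:Fin 3) : Fin 3 ⊕ Fin n × Fin 7) (Sum.inl 1) := by
    have := ca wa hwa; subst this; exact hwa
  obtain ⟨wq, hwq⟩ := hnbr (Sum.inl (2:Fin 3))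
  have cq : ∀ w, F.Adj (Sum.inl (2:Fin 3) : Fin 3 ⊕ Fin n × Fin 7) w → w = Sum.inl 1 := by
    intro w hw
    rcases adj_inl (hFle hw) with ⟨j, hj, rfl⟩ | ⟨h0, _⟩
    · have h2v : (2:Fin 3).val = 2 := rfl
      have hjlt := j.isLt
      have : j.val = 1 := by omega
      have : j = 1 := Fin.ext (by rw [this]; rfl)
      subst this; rfl
    · exact absurd h0 (by decide)
  have eqp : F.Adj (Sum.inl (2:Fin 3) : Fin 3 ⊕ Fin n × Fin 7) (Sum.inl 1) := by
    have := cq wq hwq; subst this; exact hwq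
  refine noCard3 (Sum.inl (0:Fin 3)) (Sum.inl (1:Fin 3)) (Sum.inl (2:Fin 3))
    (by simp) (by simp) (by simp) eap eqp.symm ca ?_ cq
  · intro w hw
    rcases adj_inl (hFle hw) with ⟨j, hj, rfl⟩ | ⟨h0, _⟩
    · have h1v : (1:Fin 3).val = 1 := rfl
      have hjlt := j.isLt
      have : j.val = 2 ∨ j.val = 0 := by omega
      rcases this with h | h
      · have : j = 2 := Fin.ext (by rw [h]; rfl)
        subst this; exact Or.inr rfl
      · have : j = 0 := Fin.ext (by rw [h]; rfl)
        subst this; exact Or.inl rfl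
    · exact absurd h0 (by decide)
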